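/- Let I ⊂ S = C[x_0,...,x_n] be a homogeneous ideal, d ≥ 2 an integer, and c := h_I(d) the value of the Hilbert function of I at d. Then for all 0 ≤ k ≤ d: if c ≤ d then h_I(k) ≥ min(c, k+1); if d+1 ≤ c ≤ 2d then h_I(k) ≥ min(k + (c - d), 2k + 1); if c = 2d+1 then h_I(k) ≥ 2k + 1. -/

import Mathlib

open MvPolynomial

attribute [local instance] MvPolynomial.gradedAlgebra

/-- The term `binom(i + e, i)` of a Macaulay expansion, with the convention that
it vanishes when `i + e < i`. -/
def macaulayTerm (i : ℕ) (e : ℤ) : ℕ := ((i : ℤ) + e).toNat.choose i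

/-- `ε : Fin d → ℤ`, where `ε i` stands for `ε_{i+1}`, is the Macaulay expansion of `c`
in base `d`. -/
def IsMacaulayExpansion (d c : ℕ) (ε : Fin d → ℤ) : Prop :=
  Monotone ε ∧ (∀ i, -1 ≤ ε i) ∧ c = ∑ i : Fin d, macaulayTerm (i.1 + 1) (ε i)

/-- Hilbert function of an ideal `I ⊆ S = ℂ[x_0,…,x_{m-1}]`: `h_I(k) = dim_ℂ (S/I)_k`. -/
noncomputable def hilb (m : ℕ) (I : Ideal (MvPolynomial (Fin m) ℂ)) (k : ℕ) : ℕ :=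
  Module.finrank ℂ
    (↥(homogeneousSubmodule (Fin m) ℂ k) ⧸
      Submodule.comap (homogeneousSubmodule (Fin m) ℂ k).subtype (Submodule.restrictScalars ℂ I))


open Module

namespace MacAux

variable {m : ℕ}
local notation "Mv" m => MvPolynomial (Fin m) ℂ

/-- Abbreviation for the homogeneous submodule. -/
noncomputable abbrev hg (m j : ℕ) : Submodule ℂ (Mv m) := homogeneousSubmodule (Fin m) ℂ j

/-- The shift (division by `X x`) operator as a linear map. -/
noncomputable def sh (m : ℕ) (x : Fin m) : (Mv m) →ₗ[ℂ] (Mv m) where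
  toFun p := p.divMonomial (Finsupp.single x 1)
  map_add' p q := by
    ext α
    simp [coeff_divMonomial, coeff_add]
  map_smul' c p := by
    ext α
    simp [coeff_divMonomial, coeff_smul]

lemma coeff_sh (x : Fin m) (p : Mv m) (α : Fin m →₀ ℕ) :
    coeff α (sh m x p) = coeff (Finsupp.single x 1 + α) p := rfl

lemma sh_comm (x y : Fin m) (p : Mv m) : sh m x (sh m y p) = sh m y (sh m x p) := by
  ext α
  simp only [coeff_sh]
  rw [add_left_comm]

lemma degree_add' (a b : Fin m →₀ ℕ) : (a + b).degree = a.degree + b.degree := by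
  rw [Finsupp.degree_eq_weight_one]
  exact map_add _ a b

lemma degree_single_one (x : Fin m) : (Finsupp.single x 1).degree = 1 := by
  simp [Finsupp.degree_apply, Finsupp.support_single_ne_zero]

lemma mem_homog_iff {p : Mv m} {j : ℕ} :
    p ∈ hg m j ↔ ∀ α : Fin m →₀ ℕ, coeff α p ≠ 0 → α.degree = j := by
  rw [mem_homogeneousSubmodule]
  constructor
  · intro h α hα
    rw [Finsupp.degree_eq_weight_one]
    exact h hα
  · intro h α hα
    have := h α hα
    rw [Finsupp.degree_eq_weight_one] at this
    exact this

lemma sh_mem_homog {x : Fin m} {p : Mv m} {j : ℕ} (hp : p ∈ hg m j) :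
    sh m x p ∈ hg m (j - 1) := by
  rw [mem_homog_iff] at hp ⊢
  intro α hα
  rw [coeff_sh] at hα
  have := hp _ hα
  rw [degree_add', degree_single_one] at this
  omega

/-- A polynomial homogeneous of positive degree all of whose shifts vanish is zero. -/
lemma eq_zero_of_sh_eq_zero {p : Mv m} {j : ℕ} (hj : j ≠ 0) (hp : p ∈ hg m j)
    (h : ∀ x, sh m x p = 0) : p = 0 := by
  ext α
  rw [coeff_zero]
  by_contra hα
  have hdeg := (mem_homog_iff.mp hp) α hα
  have hne : α ≠ 0 := by
    rintro rfl
    rw [map_zero] at hdeg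
    omega
  obtain ⟨x, hx⟩ := Finsupp.ne_iff.mp hne
  simp only [Finsupp.coe_zero, Pi.zero_apply] at hx
  have hx1 : Finsupp.single x 1 ≤ α := by
    rw [Finsupp.single_le_iff]
    omega
  have : coeff α p = coeff (α - Finsupp.single x 1) (sh m x p) := by
    rw [coeff_sh, add_tsub_cancel_of_le hx1]
  rw [this, h x, coeff_zero] at hα
  exact hα rfl


instance homog_fd (m j : ℕ) : FiniteDimensional ℂ ↥(hg m j) := by
  apply Submodule.finiteDimensional_of_le (S₂ := restrictTotalDegree (Fin m) ℂ j)
  intro p hp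
  rw [mem_restrictTotalDegree]
  exact (mem_homogeneousSubmodule j p).mp hp |>.totalDegree_le

/-- The space of "integrals" of `U` in degree `j`. -/
noncomputable def Intg (m j : ℕ) (U : Submodule ℂ (Mv m)) : Submodule ℂ (Mv m) :=
  hg m j ⊓ ⨅ x : Fin m, U.comap (sh m x)

lemma mem_Intg {j : ℕ} {U : Submodule ℂ (Mv m)} {p : Mv m} :
    p ∈ Intg m j U ↔ p ∈ hg m j ∧ ∀ x, sh m x p ∈ U := by
  simp [Intg, Submodule.mem_inf, Submodule.mem_iInf]

lemma Intg_le_homog {j : ℕ} {U : Submodule ℂ (Mv m)} : Intg m j U ≤ hg m j := inf_le_left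

instance Intg_fd (j : ℕ) (U : Submodule ℂ (Mv m)) : FiniteDimensional ℂ ↥(Intg m j U) :=
  Submodule.finiteDimensional_of_le Intg_le_homog

lemma finrank_eq_map_add_inf {M : Type*} [AddCommGroup M] [Module ℂ M]
    (V : Submodule ℂ M) [FiniteDimensional ℂ V] (f : M →ₗ[ℂ] M) :
    finrank ℂ V = finrank ℂ (V.map f) + finrank ℂ ↥(V ⊓ LinearMap.ker f) := by
  have h := LinearMap.finrank_range_add_finrank_ker (f ∘ₗ V.subtype)
  rw [LinearMap.range_comp, Submodule.range_subtype] at h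
  rw [LinearMap.ker_comp] at h
  rw [← h]
  congr 1
  rw [← Submodule.finrank_map_subtype_eq V (Submodule.comap V.subtype (LinearMap.ker f)),
    Submodule.map_comap_subtype, inf_comm]


lemma Intg_bot {j : ℕ} (hj : j ≠ 0) : Intg m j (⊥ : Submodule ℂ (Mv m)) = ⊥ := by
  rw [eq_bot_iff]
  intro p hp
  rw [mem_Intg] at hp
  have hz := eq_zero_of_sh_eq_zero hj hp.1 (fun x => by simpa using hp.2 x)
  simp [hz]

lemma S1 (N : ℕ) : ∀ (j : ℕ) (T : Finset (Fin m)) (U : Submodule ℂ (Mv m)),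
    j + T.card ≤ N →
    U ≤ hg m j → (∀ x ∉ T, U ≤ LinearMap.ker (sh m x)) →
    finrank ℂ U ≤ j →
    finrank ℂ ↥(Intg m (j+1) U) ≤ finrank ℂ U := by
  induction N with
  | zero =>
    intro j T U hN hU hsupp hs
    haveI : FiniteDimensional ℂ U := Submodule.finiteDimensional_of_le hU
    have hj0 : j = 0 := by omega
    have hs0 : finrank ℂ U = 0 := by omega
    have hUbot : U = ⊥ := Submodule.finrank_eq_zero.mp hs0
    rw [hUbot, Intg_bot (by omega)]
  | succ N ih =>
    intro j T U hN hU hsupp hs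
    haveI : FiniteDimensional ℂ U := Submodule.finiteDimensional_of_le hU
    by_cases hs0 : finrank ℂ U = 0
    · have hUbot : U = ⊥ := Submodule.finrank_eq_zero.mp hs0
      rw [hUbot, Intg_bot (by omega)]
    have hs1 : 1 ≤ finrank ℂ U := by omega
    have hj1 : 1 ≤ j := le_trans hs1 hs
    obtain ⟨j', rfl⟩ : ∃ j', j = j' + 1 := ⟨j - 1, by omega⟩
    have hTne : T.Nonempty := by
      by_contra hT
      rw [Finset.not_nonempty_iff_eq_empty] at hT
      have hUbot : U = ⊥ := by
        rw [eq_bot_iff]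
        intro p hp
        have hz : p = 0 := eq_zero_of_sh_eq_zero (j := j' + 1) (by omega) (hU hp)
          (fun x => by
            have := hsupp x (by simp [hT]) hp
            simpa using this)
        simp [hz]
      rw [hUbot, finrank_bot] at hs1
      omega
    obtain ⟨x, hxT⟩ := hTne
    have hc1 : 1 ≤ T.card := Finset.card_pos.mpr ⟨x, hxT⟩
    set V := Intg m (j' + 1 + 1) U with hVdef
    set K := U ⊓ LinearMap.ker (sh m x) with hKdef
    have hKle : K ≤ hg m (j' + 1) := le_trans inf_le_left hU
    haveI : FiniteDimensional ℂ K := Submodule.finiteDimensional_of_le hKle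
    have hdec : finrank ℂ V = finrank ℂ (V.map (sh m x))
        + finrank ℂ ↥(V ⊓ LinearMap.ker (sh m x)) := finrank_eq_map_add_inf V (sh m x)
    have hrank : finrank ℂ U = finrank ℂ (U.map (sh m x)) + finrank ℂ K :=
      finrank_eq_map_add_inf U (sh m x)
    -- bound 1
    have hVK : V ⊓ LinearMap.ker (sh m x) ≤ Intg m (j' + 1 + 1) K := by
      intro p hp
      obtain ⟨hpV, hpker⟩ := Submodule.mem_inf.mp hp
      have hpV' := mem_Intg.mp hpV
      rw [mem_Intg]
      refine ⟨hpV'.1, fun y => Submodule.mem_inf.mpr ⟨hpV'.2 y, LinearMap.mem_ker.mpr ?_⟩⟩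
      rw [sh_comm]
      rw [LinearMap.mem_ker] at hpker
      rw [hpker, map_zero]
    have hb1 : finrank ℂ ↥(V ⊓ LinearMap.ker (sh m x)) ≤ finrank ℂ K := by
      calc finrank ℂ ↥(V ⊓ LinearMap.ker (sh m x))
          ≤ finrank ℂ ↥(Intg m (j' + 1 + 1) K) := Submodule.finrank_mono hVK
        _ ≤ finrank ℂ K := by
            apply ih (j' + 1) (T.erase x) K
              (by have := Finset.card_erase_of_mem hxT; omega) hKle
            · intro y hy
              rcases eq_or_ne y x with rfl | hyx
              · exact inf_le_right
              · have hyT : y ∉ T := fun hyT => hy (Finset.mem_erase.mpr ⟨hyx, hyT⟩)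
                exact le_trans inf_le_left (hsupp y hyT)
            · exact le_trans (Submodule.finrank_mono inf_le_left) hs
    by_cases hs1z : finrank ℂ K = 0
    · -- injective case
      have hmapU : V.map (sh m x) ≤ U := by
        rintro _ ⟨p, hp, rfl⟩
        exact (mem_Intg.mp hp).2 x
      have : finrank ℂ (V.map (sh m x)) ≤ finrank ℂ U := Submodule.finrank_mono hmapU
      omega
    · -- s1 ≥ 1
      have hmapV : V.map (sh m x) ≤ Intg m (j' + 1) (U.map (sh m x)) := by
        rintro _ ⟨p, hp, rfl⟩
        have hp' := mem_Intg.mp hp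
        rw [mem_Intg]
        constructor
        · simpa using sh_mem_homog (x := x) hp'.1
        · intro y
          rw [sh_comm]
          exact ⟨sh m y p, hp'.2 y, rfl⟩
      have hb2 : finrank ℂ (V.map (sh m x)) ≤ finrank ℂ (U.map (sh m x)) := by
        calc finrank ℂ (V.map (sh m x))
            ≤ finrank ℂ ↥(Intg m (j' + 1) (U.map (sh m x))) := Submodule.finrank_mono hmapV
          _ ≤ finrank ℂ (U.map (sh m x)) := by
              apply ih j' T (U.map (sh m x)) (by omega)
              · rintro _ ⟨p, hp, rfl⟩
                simpa using sh_mem_homog (x := x) (hU hp)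
              · intro y hy
                rintro _ ⟨p, hp, rfl⟩
                rw [LinearMap.mem_ker, sh_comm]
                have : sh m y p = 0 := hsupp y hy hp
                rw [this, map_zero]
              · omega
      omega

lemma S2 (N : ℕ) : ∀ (j : ℕ) (T : Finset (Fin m)) (U : Submodule ℂ (Mv m)),
    j + T.card ≤ N →
    U ≤ hg m j → (∀ x ∉ T, U ≤ LinearMap.ker (sh m x)) →
    finrank ℂ U ≤ 2 * j →
    finrank ℂ ↥(Intg m (j+1) U) ≤ finrank ℂ U + 1 := by
  induction N with
  | zero =>
    intro j T U hN hU hsupp hs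
    haveI : FiniteDimensional ℂ U := Submodule.finiteDimensional_of_le hU
    have hs0 : finrank ℂ U = 0 := by omega
    have hUbot : U = ⊥ := Submodule.finrank_eq_zero.mp hs0
    rw [hUbot, Intg_bot (by omega)]
    simp
  | succ N ih =>
    intro j T U hN hU hsupp hs
    haveI : FiniteDimensional ℂ U := Submodule.finiteDimensional_of_le hU
    by_cases hs0 : finrank ℂ U = 0
    · have hUbot : U = ⊥ := Submodule.finrank_eq_zero.mp hs0
      rw [hUbot, Intg_bot (by omega)]
      simp
    have hs1 : 1 ≤ finrank ℂ U := by omega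
    have hj1 : 1 ≤ j := by omega
    obtain ⟨j', rfl⟩ : ∃ j', j = j' + 1 := ⟨j - 1, by omega⟩
    have hTne : T.Nonempty := by
      by_contra hT
      rw [Finset.not_nonempty_iff_eq_empty] at hT
      have hUbot : U = ⊥ := by
        rw [eq_bot_iff]
        intro p hp
        have hz : p = 0 := eq_zero_of_sh_eq_zero (j := j' + 1) (by omega) (hU hp)
          (fun x => by
            have := hsupp x (by simp [hT]) hp
            simpa using this)
        simp [hz]
      rw [hUbot, finrank_bot] at hs1
      omega
    obtain ⟨x, hxT⟩ := hTne
    have hc1 : 1 ≤ T.card := Finset.card_pos.mpr ⟨x, hxT⟩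
    set V := Intg m (j' + 1 + 1) U with hVdef
    set K := U ⊓ LinearMap.ker (sh m x) with hKdef
    have hKle : K ≤ hg m (j' + 1) := le_trans inf_le_left hU
    haveI : FiniteDimensional ℂ K := Submodule.finiteDimensional_of_le hKle
    have hdec : finrank ℂ V = finrank ℂ (V.map (sh m x))
        + finrank ℂ ↥(V ⊓ LinearMap.ker (sh m x)) := finrank_eq_map_add_inf V (sh m x)
    have hrank : finrank ℂ U = finrank ℂ (U.map (sh m x)) + finrank ℂ K :=
      finrank_eq_map_add_inf U (sh m x)
    have hKU : finrank ℂ K ≤ finrank ℂ U := Submodule.finrank_mono inf_le_left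
    -- facts shared by all cases
    have hVK : V ⊓ LinearMap.ker (sh m x) ≤ Intg m (j' + 1 + 1) K := by
      intro p hp
      obtain ⟨hpV, hpker⟩ := Submodule.mem_inf.mp hp
      have hpV' := mem_Intg.mp hpV
      rw [mem_Intg]
      refine ⟨hpV'.1, fun y => Submodule.mem_inf.mpr ⟨hpV'.2 y, LinearMap.mem_ker.mpr ?_⟩⟩
      rw [sh_comm]
      rw [LinearMap.mem_ker] at hpker
      rw [hpker, map_zero]
    have hKsupp : ∀ y ∉ T.erase x, K ≤ LinearMap.ker (sh m y) := by
      intro y hy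
      rcases eq_or_ne y x with rfl | hyx
      · exact inf_le_right
      · have hyT : y ∉ T := fun hyT => hy (Finset.mem_erase.mpr ⟨hyx, hyT⟩)
        exact le_trans inf_le_left (hsupp y hyT)
    have hmapV : V.map (sh m x) ≤ Intg m (j' + 1) (U.map (sh m x)) := by
      rintro _ ⟨p, hp, rfl⟩
      have hp' := mem_Intg.mp hp
      rw [mem_Intg]
      constructor
      · simpa using sh_mem_homog (x := x) hp'.1
      · intro y
        rw [sh_comm]
        exact ⟨sh m y p, hp'.2 y, rfl⟩
    have hmapUle : U.map (sh m x) ≤ hg m j' := by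
      rintro _ ⟨p, hp, rfl⟩
      simpa using sh_mem_homog (x := x) (hU hp)
    have hmapUsupp : ∀ y ∉ T, U.map (sh m x) ≤ LinearMap.ker (sh m y) := by
      intro y hy
      rintro _ ⟨p, hp, rfl⟩
      rw [LinearMap.mem_ker, sh_comm]
      have : sh m y p = 0 := hsupp y hy hp
      rw [this, map_zero]
    have hmapVU : V.map (sh m x) ≤ U := by
      rintro _ ⟨p, hp, rfl⟩
      exact (mem_Intg.mp hp).2 x
    by_cases hs1le : finrank ℂ K ≤ 1
    · -- case A : small kernel; use S1 for the kernel part and map V ≤ U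
      have hb1 : finrank ℂ ↥(V ⊓ LinearMap.ker (sh m x)) ≤ finrank ℂ K := by
        calc finrank ℂ ↥(V ⊓ LinearMap.ker (sh m x))
            ≤ finrank ℂ ↥(Intg m (j' + 1 + 1) K) := Submodule.finrank_mono hVK
          _ ≤ finrank ℂ K :=
            S1 (j' + 1 + (T.erase x).card) (j' + 1) (T.erase x) K le_rfl hKle hKsupp
              (by omega)
      have hb2 : finrank ℂ (V.map (sh m x)) ≤ finrank ℂ U := Submodule.finrank_mono hmapVU
      omega
    · -- case B : kernel has dimension ≥ 2
      by_cases hs1j : finrank ℂ K ≤ j' + 1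
      · -- B1 : use S1 on kernel part, S2 (ih) on image part
        have hb1 : finrank ℂ ↥(V ⊓ LinearMap.ker (sh m x)) ≤ finrank ℂ K := by
          calc finrank ℂ ↥(V ⊓ LinearMap.ker (sh m x))
              ≤ finrank ℂ ↥(Intg m (j' + 1 + 1) K) := Submodule.finrank_mono hVK
            _ ≤ finrank ℂ K :=
              S1 (j' + 1 + (T.erase x).card) (j' + 1) (T.erase x) K le_rfl hKle hKsupp
                (by omega)
        have hb2 : finrank ℂ (V.map (sh m x)) ≤ finrank ℂ (U.map (sh m x)) + 1 := by
          calc finrank ℂ (V.map (sh m x))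
              ≤ finrank ℂ ↥(Intg m (j' + 1) (U.map (sh m x))) := Submodule.finrank_mono hmapV
            _ ≤ finrank ℂ (U.map (sh m x)) + 1 :=
              ih j' T (U.map (sh m x)) (by omega) hmapUle hmapUsupp (by omega)
        omega
      · -- B2 : use S2 (ih) on kernel part, S1 on image part
        have hb1 : finrank ℂ ↥(V ⊓ LinearMap.ker (sh m x)) ≤ finrank ℂ K + 1 := by
          calc finrank ℂ ↥(V ⊓ LinearMap.ker (sh m x))
              ≤ finrank ℂ ↥(Intg m (j' + 1 + 1) K) := Submodule.finrank_mono hVK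
            _ ≤ finrank ℂ K + 1 :=
              ih (j' + 1) (T.erase x) K
                (by have := Finset.card_erase_of_mem hxT; omega) hKle hKsupp (by omega)
        have hb2 : finrank ℂ (V.map (sh m x)) ≤ finrank ℂ (U.map (sh m x)) := by
          calc finrank ℂ (V.map (sh m x))
              ≤ finrank ℂ ↥(Intg m (j' + 1) (U.map (sh m x))) := Submodule.finrank_mono hmapV
            _ ≤ finrank ℂ (U.map (sh m x)) :=
              S1 (j' + T.card) j' T (U.map (sh m x)) le_rfl hmapUle hmapUsupp (by omega)
        omega

/-! ### The monomial-coefficient pairing -/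

noncomputable def pair (F G : Mv m) : ℂ := ∑ α ∈ F.support, coeff α F * coeff α G

lemma pair_eq_of_subset {F G : Mv m} {s : Finset (Fin m →₀ ℕ)} (hs : F.support ⊆ s) :
    pair F G = ∑ α ∈ s, coeff α F * coeff α G := by
  unfold pair
  refine Finset.sum_subset hs fun α _ hα => ?_
  rw [notMem_support_iff.mp hα, zero_mul]

lemma pair_comm (F G : Mv m) : pair F G = pair G F := by
  rw [pair_eq_of_subset (Finset.subset_union_left (s₂ := G.support)),
    pair_eq_of_subset (Finset.subset_union_right (s₁ := F.support)),
    Finset.union_comm]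
  exact Finset.sum_congr rfl fun α _ => mul_comm _ _

lemma pair_add_right (F G H : Mv m) : pair F (G + H) = pair F G + pair F H := by
  unfold pair
  rw [← Finset.sum_add_distrib]
  exact Finset.sum_congr rfl fun α _ => by rw [coeff_add, mul_add]

lemma pair_smul_right (c : ℂ) (F G : Mv m) : pair F (c • G) = c * pair F G := by
  unfold pair
  rw [Finset.mul_sum]
  exact Finset.sum_congr rfl fun α _ => by
    rw [coeff_smul, smul_eq_mul]; ring

lemma pair_add_left (F G H : Mv m) : pair (F + G) H = pair F H + pair G H := by
  rw [pair_comm, pair_add_right, pair_comm H F, pair_comm H G]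

lemma pair_smul_left (c : ℂ) (F G : Mv m) : pair (c • F) G = c * pair F G := by
  rw [pair_comm, pair_smul_right, pair_comm G F]

lemma pair_monomial (β : Fin m →₀ ℕ) (c : ℂ) (G : Mv m) :
    pair (monomial β c) G = c * coeff β G := by
  by_cases hc : c = 0
  · simp [pair, hc]
  · unfold pair
    rw [support_monomial, if_neg hc, Finset.sum_singleton, coeff_monomial, if_pos rfl]

lemma pair_X_mul (x : Fin m) (F G : Mv m) : pair (X x * F) G = pair F (sh m x G) := by
  induction F using MvPolynomial.induction_on' with
  | monomial α c =>
    have : (X x : Mv m) * monomial α c = monomial (Finsupp.single x 1 + α) c := by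
      rw [X, monomial_mul, one_mul]
    rw [this, pair_monomial, pair_monomial, coeff_sh]
  | add p q hp hq =>
    rw [mul_add, pair_add_left, pair_add_left, hp, hq]

/-! ### The bilinear form on the degree-`k` homogeneous component -/

noncomputable def bil (m k : ℕ) : LinearMap.BilinForm ℂ ↥(hg m k) :=
  LinearMap.mk₂ ℂ (fun F G => pair F.1 G.1)
    (fun F F' G => by simp only [Submodule.coe_add, pair_add_left])
    (fun c F G => by simp only [Submodule.coe_smul, pair_smul_left, smul_eq_mul])
    (fun F G G' => by simp only [Submodule.coe_add, pair_add_right])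
    (fun c F G => by simp only [Submodule.coe_smul, pair_smul_right, smul_eq_mul])

lemma bil_apply (k : ℕ) (F G : ↥(hg m k)) : bil m k F G = pair F.1 G.1 := rfl

lemma bil_refl (k : ℕ) : (bil m k).IsRefl := by
  intro F G h
  rw [bil_apply, pair_comm] at h
  exact h

lemma bil_nondeg (k : ℕ) : (bil m k).Nondegenerate := by
  refine (LinearMap.IsRefl.nondegenerate_iff_separatingLeft (bil_refl k)).mpr ?_
  intro G hG
  have hG1 : (G : Mv m) = 0 := by
    by_contra hne
    obtain ⟨α, hα⟩ := (support_nonempty (p := (G : Mv m))).mpr hne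
    have hdeg : α.degree = k := mem_homog_iff.mp G.2 α (mem_support_iff.mp hα)
    have hmono : (monomial α (1 : ℂ)) ∈ hg m k := by
      rw [mem_homogeneousSubmodule]
      exact isHomogeneous_monomial _ hdeg
    have h0 := hG ⟨monomial α 1, hmono⟩
    rw [bil_apply, pair_comm, pair_monomial, one_mul] at h0
    exact mem_support_iff.mp hα h0
  exact Subtype.ext hG1


/-! ### The perp space of an ideal in each degree -/

variable (I : Ideal (MvPolynomial (Fin m) ℂ))

noncomputable def Jsub (m k : ℕ) (I : Ideal (MvPolynomial (Fin m) ℂ)) :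
    Submodule ℂ ↥(hg m k) :=
  Submodule.comap (hg m k).subtype (Submodule.restrictScalars ℂ I)

noncomputable def Wb (m k : ℕ) (I : Ideal (MvPolynomial (Fin m) ℂ)) :
    Submodule ℂ (Mv m) :=
  ((bil m k).orthogonal (Jsub m k I)).map (hg m k).subtype

lemma Wb_le_homog (k : ℕ) : Wb m k I ≤ hg m k := Submodule.map_subtype_le _ _

instance Wb_fd (k : ℕ) : FiniteDimensional ℂ ↥(Wb m k I) :=
  Submodule.finiteDimensional_of_le (Wb_le_homog I k)

lemma finrank_Wb (k : ℕ) :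
    finrank ℂ ↥(Wb m k I) + finrank ℂ ↥(Jsub m k I) = finrank ℂ ↥(hg m k) := by
  have h1 : finrank ℂ ↥(Wb m k I) = finrank ℂ ↥((bil m k).orthogonal (Jsub m k I)) :=
    Submodule.finrank_map_subtype_eq _ _
  have h2 := LinearMap.BilinForm.finrank_orthogonal (bil_nondeg k) (Jsub m k I)
  have h3 : finrank ℂ ↥(Jsub m k I) ≤ finrank ℂ ↥(hg m k) := Submodule.finrank_le _
  omega

lemma finrank_Wb_eq_hilb (k : ℕ) :
    finrank ℂ ↥(Wb m k I) =
      finrank ℂ (↥(hg m k) ⧸ Jsub m k I) := by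
  have h1 := finrank_Wb I k
  have h2 := Submodule.finrank_quotient_add_finrank (Jsub m k I)
  omega

lemma sh_Wb (x : Fin m) (k : ℕ) {G : Mv m} (hG : G ∈ Wb m (k+1) I) :
    sh m x G ∈ Wb m k I := by
  obtain ⟨G', hG', rfl⟩ := hG
  have hmemh : sh m x (G' : Mv m) ∈ hg m k := by
    simpa using sh_mem_homog (x := x) G'.2
  refine ⟨⟨sh m x (G' : Mv m), hmemh⟩, ?_, rfl⟩
  rw [SetLike.mem_coe, LinearMap.BilinForm.mem_orthogonal_iff]
  intro F hF
  have hFI : (F : Mv m) ∈ I := hF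
  have hmem : X x * (F : Mv m) ∈ hg m (k+1) := by
    rw [mem_homogeneousSubmodule]
    have h1 : (X x : Mv m).IsHomogeneous 1 := isHomogeneous_X ℂ x
    have hFh : (F : Mv m).IsHomogeneous k := F.2
    simpa [add_comm] using h1.mul hFh
  have hXI : X x * (F : Mv m) ∈ I := Ideal.mul_mem_left I _ hFI
  have hG'' : G' ∈ (bil m (k+1)).orthogonal (Jsub m (k+1) I) := hG'
  have horth := hG'' ⟨X x * (F : Mv m), hmem⟩ (by exact hXI)
  rw [bil_apply] at horth ⊢
  rw [← pair_X_mul]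
  exact horth

/-! ### The descending chain of shift-spans -/

noncomputable def chainX (m : ℕ) (I : Ideal (MvPolynomial (Fin m) ℂ)) (d : ℕ) :
    ℕ → Submodule ℂ (Mv m)
  | 0 => Wb m d I
  | t + 1 => ⨆ x : Fin m, (chainX m I d t).map (sh m x)

variable (I : Ideal (MvPolynomial (Fin m) ℂ)) (d : ℕ)

lemma chainX_le_homog : ∀ t, chainX m I d t ≤ hg m (d - t)
  | 0 => by simpa [chainX] using Wb_le_homog I d
  | t + 1 => by
    rw [show chainX m I d (t+1) = ⨆ x : Fin m, (chainX m I d t).map (sh m x) from rfl]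
    refine iSup_le fun x => ?_
    rintro _ ⟨p, hp, rfl⟩
    have := sh_mem_homog (x := x) (chainX_le_homog t hp)
    rwa [show d - t - 1 = d - (t+1) from by omega] at this

instance chainX_fd (t : ℕ) : FiniteDimensional ℂ ↥(chainX m I d t) :=
  Submodule.finiteDimensional_of_le (chainX_le_homog I d t)

lemma chainX_le_Wb : ∀ t, t ≤ d → chainX m I d t ≤ Wb m (d - t) I
  | 0, _ => by simpa [chainX] using le_rfl
  | t + 1, ht => by
    rw [show chainX m I d (t+1) = ⨆ x : Fin m, (chainX m I d t).map (sh m x) from rfl]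
    refine iSup_le fun x => ?_
    rintro _ ⟨p, hp, rfl⟩
    have hp' : p ∈ Wb m (d - (t+1) + 1) I := by
      have := chainX_le_Wb t (by omega) hp
      rwa [show d - t = d - (t+1) + 1 from by omega] at this
    exact sh_Wb I x (d - (t+1)) hp'

lemma growth1 (t : ℕ) (ht : t + 1 ≤ d) :
    min (finrank ℂ ↥(chainX m I d t)) (d - t) ≤ finrank ℂ ↥(chainX m I d (t+1)) := by
  set j := d - t - 1 with hjdef
  set U := chainX m I d (t+1) with hUdef
  have hUle : U ≤ hg m j := by
    have := chainX_le_homog I d (t+1)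
    rwa [show d - (t+1) = j from by omega] at this
  have hVle : chainX m I d t ≤ Intg m (j+1) U := by
    intro p hp
    rw [mem_Intg]
    constructor
    · have := chainX_le_homog I d t hp
      rwa [show d - t = j + 1 from by omega] at this
    · intro x
      have : (chainX m I d t).map (sh m x) ≤ U := by
        rw [hUdef, show chainX m I d (t+1) = ⨆ x : Fin m, (chainX m I d t).map (sh m x) from rfl]
        exact le_iSup (fun y : Fin m => (chainX m I d t).map (sh m y)) x
      exact this ⟨p, hp, rfl⟩
  by_cases hU : finrank ℂ U ≤ j
  · have hS := S1 (j + (Finset.univ : Finset (Fin m)).card) j Finset.univ U le_rfl hUle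
      (fun x hx => absurd (Finset.mem_univ x) hx) hU
    have h2 : finrank ℂ ↥(chainX m I d t) ≤ finrank ℂ ↥(Intg m (j+1) U) :=
      Submodule.finrank_mono hVle
    omega
  · omega

lemma growth2 (t : ℕ) (ht : t + 1 ≤ d) :
    min (finrank ℂ ↥(chainX m I d t) - 1) (2 * (d - t) - 1) ≤
      finrank ℂ ↥(chainX m I d (t+1)) := by
  set j := d - t - 1 with hjdef
  set U := chainX m I d (t+1) with hUdef
  have hUle : U ≤ hg m j := by
    have := chainX_le_homog I d (t+1)
    rwa [show d - (t+1) = j from by omega] at this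
  have hVle : chainX m I d t ≤ Intg m (j+1) U := by
    intro p hp
    rw [mem_Intg]
    constructor
    · have := chainX_le_homog I d t hp
      rwa [show d - t = j + 1 from by omega] at this
    · intro x
      have : (chainX m I d t).map (sh m x) ≤ U := by
        rw [hUdef, show chainX m I d (t+1) = ⨆ x : Fin m, (chainX m I d t).map (sh m x) from rfl]
        exact le_iSup (fun y : Fin m => (chainX m I d t).map (sh m y)) x
      exact this ⟨p, hp, rfl⟩
  by_cases hU : finrank ℂ U ≤ 2 * j
  · have hS := S2 (j + (Finset.univ : Finset (Fin m)).card) j Finset.univ U le_rfl hUle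
      (fun x hx => absurd (Finset.mem_univ x) hx) hU
    have h2 : finrank ℂ ↥(chainX m I d t) ≤ finrank ℂ ↥(Intg m (j+1) U) :=
      Submodule.finrank_mono hVle
    omega
  · omega

lemma main_bounds : ∀ t, t ≤ d →
    (finrank ℂ ↥(chainX m I d 0) ≤ d →
      min (finrank ℂ ↥(chainX m I d 0)) (d - t + 1) ≤ finrank ℂ ↥(chainX m I d t)) ∧
    (d + 1 ≤ finrank ℂ ↥(chainX m I d 0) → finrank ℂ ↥(chainX m I d 0) ≤ 2 * d →
      min ((d - t) + (finrank ℂ ↥(chainX m I d 0) - d)) (2 * (d - t) + 1) ≤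
        finrank ℂ ↥(chainX m I d t)) ∧
    (finrank ℂ ↥(chainX m I d 0) = 2 * d + 1 →
      2 * (d - t) + 1 ≤ finrank ℂ ↥(chainX m I d t)) := by
  intro t
  induction t with
  | zero =>
    intro _
    refine ⟨fun h => ?_, fun h1 h2 => ?_, fun h => ?_⟩ <;> omega
  | succ t ihw =>
    intro ht
    have ih := ihw (by omega)
    have g1 := growth1 I d t (by omega)
    have g2 := growth2 I d t (by omega)
    refine ⟨fun h => ?_, fun h1 h2 => ?_, fun h => ?_⟩
    · have := ih.1 h
      omega
    · have := ih.2.1 h1 h2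
      omega
    · have := ih.2.2 h
      omega

end MacAux

open MacAux in
theorem hilb_lower_bounds_low_degrees (n d k : ℕ) (hd : 2 ≤ d) (hk : k ≤ d)
    (I : Ideal (MvPolynomial (Fin (n + 1)) ℂ))
    (hI : I.IsHomogeneous (homogeneousSubmodule (Fin (n + 1)) ℂ)) :
    (hilb (n + 1) I d ≤ d → min (hilb (n + 1) I d) (k + 1) ≤ hilb (n + 1) I k) ∧
    (d + 1 ≤ hilb (n + 1) I d → hilb (n + 1) I d ≤ 2 * d →
      min (k + (hilb (n + 1) I d - d)) (2 * k + 1) ≤ hilb (n + 1) I k) ∧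
    (hilb (n + 1) I d = 2 * d + 1 → 2 * k + 1 ≤ hilb (n + 1) I k) := by
  have hilb_eq : ∀ j, hilb (n+1) I j = finrank ℂ ↥(Wb (n+1) j I) :=
    fun j => (finrank_Wb_eq_hilb I j).symm
  have hk' : d - (d - k) = k := by omega
  have h1 : finrank ℂ ↥(chainX (n+1) I d (d - k)) ≤ hilb (n+1) I k := by
    rw [hilb_eq k]
    refine Submodule.finrank_mono ?_
    have := chainX_le_Wb I d (d - k) (by omega)
    rwa [hk'] at this
  have h0 : hilb (n+1) I d = finrank ℂ ↥(chainX (n+1) I d 0) := by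
    rw [hilb_eq d]
    rfl
  have hm := main_bounds I d (d - k) (by omega)
  rw [hk'] at hm
  obtain ⟨hm1, hm2, hm3⟩ := hm
  refine ⟨fun h => ?_, fun ha hb => ?_, fun h => ?_⟩
  · have := hm1 (by omega)
    omega
  · have := hm2 (by omega) (by omega)
    omega
  · have := hm3 (by omega)
    omega
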